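/- Let r, s, m be integers with r ≥ s ≥ 3 and m ≥ 3, set n = 2r + s, and let f = z_1^m + z_1^{m-1}(z_2 + ⋯ + z_r) + z_{r+1}^m + ⋯ + z_n^m in the polynomial ring ℂ[z_1, …, z_n]. Then the set of points a ∈ ℂ^n at which all n partial derivatives ∂f/∂z_1, …, ∂f/∂z_n vanish simultaneously equals the coordinate-linear subspace {a ∈ ℂ^n : a_1 = 0 and a_j = 0 for all r+1 ≤ j ≤ n}; in particular this common zero locus is a complex-linear subspace of dimension r − 1. -/
import Mathlib


open MvPolynomial

/-- Soares' example, singular set of the foliation `𝒢_s` defined by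
`df`. Let `r ≥ s ≥ 3`, `m ≥ 3`, `n = 2r + s`, and
`f = z₁^m + z₁^{m-1}(z₂ + ⋯ + z_r) + z_{r+1}^m + ⋯ + z_n^m ∈ ℂ[z₁, …, z_n]`
(variables indexed by `Fin n`, with `z_{i+1} = X i`). Then the common zero locus of the
`n` partial derivatives `∂f/∂z_i` is exactly the coordinate-linear subspace
`{a : a₁ = 0 and a_j = 0 for r+1 ≤ j ≤ n}`; in particular it is a complex-linear
subspace of dimension `r - 1`. -/
theorem stmt0 (r s m n : ℕ) (hsr : s ≤ r) (hs : 3 ≤ s) (hm : 3 ≤ m)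
    (hn : n = 2 * r + s)
    (f : MvPolynomial (Fin n) ℂ)
    (hf : f = X (⟨0, by omega⟩ : Fin n) ^ m
        + X (⟨0, by omega⟩ : Fin n) ^ (m - 1) *
            (∑ j ∈ Finset.univ.filter (fun j : Fin n => 1 ≤ (j : ℕ) ∧ (j : ℕ) < r), X j)
        + ∑ j ∈ Finset.univ.filter (fun j : Fin n => r ≤ (j : ℕ)), X j ^ m) :
    {a : Fin n → ℂ | ∀ i : Fin n, eval a (pderiv i f) = 0}
        = {a : Fin n → ℂ | a ⟨0, by omega⟩ = 0 ∧ ∀ j : Fin n, r ≤ (j : ℕ) → a j = 0} ∧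
      ∃ L : Submodule ℂ (Fin n → ℂ),
        (L : Set (Fin n → ℂ))
            = {a : Fin n → ℂ | a ⟨0, by omega⟩ = 0 ∧ ∀ j : Fin n, r ≤ (j : ℕ) → a j = 0} ∧
        Module.finrank ℂ L = r - 1 := by
  have hrn : r ≤ n := by omega
  have hm1 : m - 1 ≠ 0 := by omega
  have hm2 : m - 1 - 1 ≠ 0 := by omega
  constructor
  · ext a
    simp only [Set.mem_setOf_eq]
    constructor
    · intro h
      constructor
      · have h1 := h ⟨1, by omega⟩
        simp only [hf, map_add, pderiv_pow, pderiv_mul, map_sum, eval_mul, eval_pow, eval_X,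
          eval_add, pderiv_X, map_natCast, Pi.single_apply, apply_ite (eval a), map_one,
          map_zero, mul_ite, mul_one, mul_zero, Finset.sum_ite_eq', Finset.mem_filter,
          Finset.mem_univ, true_and, Fin.mk.injEq] at h1
        rw [if_neg (by omega), if_neg (by omega), if_pos (by constructor <;> omega),
          if_neg (by omega : ¬ r ≤ (1 : ℕ))] at h1
        simp only [zero_mul, zero_add, add_zero] at h1
        exact pow_eq_zero_iff hm1 |>.mp h1
      · intro j hj
        have h1 := h j
        simp only [hf, map_add, pderiv_pow, pderiv_mul, map_sum, eval_mul, eval_pow, eval_X,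
          eval_add, pderiv_X, map_natCast, Pi.single_apply, apply_ite (eval a), map_one,
          map_zero, mul_ite, mul_one, mul_zero, Finset.sum_ite_eq', Finset.mem_filter,
          Finset.mem_univ, true_and] at h1
        rw [if_neg (by rw [Fin.ext_iff]; simp; omega),
          if_neg (by rw [Fin.ext_iff]; simp; omega),
          if_neg (by omega), if_pos hj] at h1
        simp only [zero_mul, zero_add, add_zero] at h1
        rcases mul_eq_zero.mp h1 with hc | hc
        · exact absurd hc (by exact_mod_cast by omega)
        · exact pow_eq_zero_iff hm1 |>.mp hc
    · rintro ⟨h0, hr⟩ i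
      simp only [hf, map_add, pderiv_pow, pderiv_mul, map_sum, eval_mul, eval_pow, eval_X,
        eval_add, pderiv_X, map_natCast, Pi.single_apply, apply_ite (eval a), map_one,
        map_zero, mul_ite, mul_one, mul_zero, Finset.sum_ite_eq', Finset.mem_filter,
        Finset.mem_univ, true_and, h0, zero_pow hm1, zero_pow hm2, mul_zero, ite_self,
        zero_mul, add_zero, zero_add]
      split_ifs with h1
      · rw [hr i h1, zero_pow hm1, mul_zero]
      · rfl
  · -- the linear subspace
    classical
    let ψ : ({j : Fin n // 1 ≤ (j : ℕ) ∧ (j : ℕ) < r} → ℂ) →ₗ[ℂ] (Fin n → ℂ) :=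
      { toFun := fun b j => if h : 1 ≤ (j : ℕ) ∧ (j : ℕ) < r then b ⟨j, h⟩ else 0
        map_add' := by
          intro x y; funext j
          by_cases h : 1 ≤ (j : ℕ) ∧ (j : ℕ) < r
          · simp only [dif_pos h, Pi.add_apply]
          · simp only [Pi.add_apply, dif_neg h, add_zero]
        map_smul' := by
          intro c x; funext j
          by_cases h : 1 ≤ (j : ℕ) ∧ (j : ℕ) < r
          · simp only [dif_pos h, Pi.smul_apply, RingHom.id_apply]
          · simp only [RingHom.id_apply, Pi.smul_apply, dif_neg h, smul_zero] }
    have hψ : Function.Injective ψ := by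
      intro b c hbc
      funext p
      have := congrFun hbc p.1
      simpa [ψ, dif_pos p.2] using this
    refine ⟨LinearMap.range ψ, ?_, ?_⟩
    · ext a
      simp only [SetLike.mem_coe, LinearMap.mem_range, Set.mem_setOf_eq]
      constructor
      · rintro ⟨b, rfl⟩
        constructor
        · simp only [ψ, LinearMap.coe_mk, AddHom.coe_mk]
          rw [dif_neg (by simp)]
        · intro j hj
          simp only [ψ, LinearMap.coe_mk, AddHom.coe_mk]
          rw [dif_neg (by omega)]
      · rintro ⟨h0, hr⟩
        refine ⟨fun p => a p.1, ?_⟩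
        funext j
        simp only [ψ, LinearMap.coe_mk, AddHom.coe_mk]
        by_cases h : 1 ≤ (j : ℕ) ∧ (j : ℕ) < r
        · rw [dif_pos h]
        · rw [dif_neg h]
          rcases (by omega : (j : ℕ) = 0 ∨ r ≤ (j : ℕ)) with hc | hc
          · have : j = ⟨0, by omega⟩ := by rw [Fin.ext_iff]; exact hc
            rw [this, h0]
          · exact (hr j hc).symm
    · rw [LinearMap.finrank_range_of_inj hψ, Module.finrank_pi]
      have e : Fin (r - 1) ≃ {j : Fin n // 1 ≤ (j : ℕ) ∧ (j : ℕ) < r} :=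
        { toFun := fun k => ⟨⟨(k : ℕ) + 1, by have := k.isLt; omega⟩, by
            have := k.isLt
            simp only [Fin.val_mk]
            omega⟩
          invFun := fun p => ⟨(p.1 : ℕ) - 1, by have := p.2; omega⟩
          left_inv := by
            intro k
            ext
            simp only [Fin.val_mk]
            omega
          right_inv := by
            intro p
            have := p.2
            ext
            simp only [Fin.val_mk]
            omega }
      rw [Fintype.card_congr e.symm, Fintype.card_fin]
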